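/- Let p be an odd prime and n ≥ 1. Let G ≤ GL₂(ℤ/pⁿℤ) be a p-group whose elements all fix the vector (1,0), i.e., are upper triangular of the form [[1,f],[0,1+s·p^k]] with k ≥ 1. Suppose G is generated by δ = [[1,0],[0,1+p^i]] and σ = [[1,p^e],[0,1]] for some i,e. Then H¹_loc(G,(ℤ/pⁿℤ)²) = 0. -/

import Mathlib

open Matrix

/-- Let `p` be an odd prime, `n ≥ 1`, and let `G ≤ GL₂(ℤ/pⁿℤ)` be a
`p`-group generated by `δ = [[1,0],[0,1+p^i]]` and `σ = [[1,p^e],[0,1]]` (all of whose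
elements therefore fix `(1,0)`).  Then `H¹_loc(G,(ℤ/pⁿℤ)²) = 0`: every cocycle on `G`
satisfying the local conditions is a coboundary. -/
theorem statement6 (p : ℕ) (hp : p.Prime) (hodd : Odd p) (n : ℕ) (hn : 1 ≤ n)
    (i e : ℕ) (hi : 1 ≤ i) (he : 1 ≤ e)
    (d s : GL (Fin 2) (ZMod (p ^ n)))
    (hd : (d : Matrix (Fin 2) (Fin 2) (ZMod (p ^ n))) = !![1, 0; 0, 1 + (p : ZMod (p ^ n)) ^ i])
    (hs : (s : Matrix (Fin 2) (Fin 2) (ZMod (p ^ n))) = !![1, (p : ZMod (p ^ n)) ^ e; 0, 1])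
    (G : Subgroup (GL (Fin 2) (ZMod (p ^ n))))
    (hG : G = Subgroup.closure {d, s})
    (hpG : IsPGroup p G)
    (hfix : ∀ g ∈ G, (g : Matrix (Fin 2) (Fin 2) (ZMod (p ^ n))) *ᵥ ![1, 0] = ![1, 0])
    (Z : G → Fin 2 → ZMod (p ^ n))
    (hZ : ∀ g h : G, Z (g * h) = Z g +
      ((g : GL (Fin 2) (ZMod (p ^ n))) : Matrix (Fin 2) (Fin 2) (ZMod (p ^ n))) *ᵥ Z h)
    (hloc : ∀ g : G, ∃ v : Fin 2 → ZMod (p ^ n),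
      Z g = ((g : GL (Fin 2) (ZMod (p ^ n))) : Matrix (Fin 2) (Fin 2) (ZMod (p ^ n))) *ᵥ v - v) :
    ∃ v : Fin 2 → ZMod (p ^ n), ∀ g : G,
      Z g = ((g : GL (Fin 2) (ZMod (p ^ n))) : Matrix (Fin 2) (Fin 2) (ZMod (p ^ n))) *ᵥ v - v := by
  subst hG
  set R := ZMod (p ^ n)
  set t : R := (p : R) ^ e with ht
  set u : R := (p : R) ^ i with hu
  have hdG : d ∈ Subgroup.closure {d, s} :=
    Subgroup.subset_closure (Set.mem_insert _ _)
  have hsG : s ∈ Subgroup.closure {d, s} :=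
    Subgroup.subset_closure (Set.mem_insert_of_mem _ rfl)
  set D : Subgroup.closure {d, s} := ⟨d, hdG⟩ with hD
  set S : Subgroup.closure {d, s} := ⟨s, hsG⟩ with hS
  have hDd : ((D : GL (Fin 2) R) : Matrix (Fin 2) (Fin 2) R) = d := rfl
  have hSs : ((S : GL (Fin 2) R) : Matrix (Fin 2) (Fin 2) R) = s := rfl
  -- Z 1 = 0
  have hZ1 : Z 1 = 0 := by
    have h := hZ 1 1
    simp only [mul_one, OneMemClass.coe_one, Units.val_one, Matrix.one_mulVec] at h
    exact (left_eq_add.mp h)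
  obtain ⟨va, hva⟩ := hloc D
  obtain ⟨vb, hvb⟩ := hloc S
  obtain ⟨vc, hvc⟩ := hloc (S * D)
  -- components of Z D
  have hZD0 : Z D 0 = 0 := by
    have h := congrFun hva 0
    simp [hDd, hd, Matrix.mulVec, dotProduct, Fin.sum_univ_two] at h
    exact h
  have hZD1 : Z D 1 = u * va 1 := by
    have h := congrFun hva 1
    simp [hDd, hd, Matrix.mulVec, dotProduct, Fin.sum_univ_two] at h
    linear_combination h
  -- components of Z S
  have hZS0 : Z S 0 = t * vb 1 := by
    have h := congrFun hvb 0
    simp [hSs, hs, Matrix.mulVec, dotProduct, Fin.sum_univ_two] at h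
    linear_combination h
  have hZS1 : Z S 1 = 0 := by
    have h := congrFun hvb 1
    simp [hSs, hs, Matrix.mulVec, dotProduct, Fin.sum_univ_two] at h
    exact h
  -- the matrix of S * D
  have hSD : ((((S * D : Subgroup.closure {d, s}) : GL (Fin 2) R)) :
      Matrix (Fin 2) (Fin 2) R) = !![1, t * (1 + u); 0, 1 + u] := by
    have : (((S * D : Subgroup.closure {d, s}) : GL (Fin 2) R) :
        Matrix (Fin 2) (Fin 2) R) = (s : Matrix (Fin 2) (Fin 2) R) *
        (d : Matrix (Fin 2) (Fin 2) R) := rfl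
    rw [this, hd, hs]
    rw [Matrix.mul_fin_two]
    norm_num [mul_add]
  -- components of Z (S*D) from the local condition
  have hZSD0 : Z (S * D) 0 = t * (1 + u) * vc 1 := by
    have h := congrFun hvc 0
    rw [hSD] at h
    simp [Matrix.mulVec, dotProduct, Fin.sum_univ_two] at h
    linear_combination h
  have hZSD1 : Z (S * D) 1 = u * vc 1 := by
    have h := congrFun hvc 1
    rw [hSD] at h
    simp [Matrix.mulVec, dotProduct, Fin.sum_univ_two] at h
    linear_combination h
  -- components of Z (S*D) from the cocycle relation
  have hcc := hZ S D
  have hcc0 : Z (S * D) 0 = t * vb 1 + t * (u * va 1) := by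
    have h := congrFun hcc 0
    simp [hSs, hs, Matrix.mulVec, dotProduct, Fin.sum_univ_two, hZS0, hZD0, hZD1] at h
    linear_combination h
  have hcc1 : Z (S * D) 1 = u * va 1 := by
    have h := congrFun hcc 1
    simp [hSs, hs, Matrix.mulVec, dotProduct, Fin.sum_univ_two, hZS1, hZD0, hZD1] at h
    linear_combination h
  -- the key arithmetic facts
  have hc1 : u * vc 1 = u * va 1 := by rw [← hZSD1, hcc1]
  have hc0 : t * (1 + u) * vc 1 = t * vb 1 + t * (u * va 1) := by rw [← hZSD0, hcc0]
  have htc : t * vc 1 = t * vb 1 := by linear_combination hc0 - t * hc1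
  -- the global coboundary vector
  set v : Fin 2 → R := ![0, vc 1] with hv
  refine ⟨v, ?_⟩
  -- it works on the generators
  have hDv : Z D = (d : Matrix (Fin 2) (Fin 2) R) *ᵥ v - v := by
    funext j
    fin_cases j
    · simp [hd, Matrix.mulVec, dotProduct, Fin.sum_univ_two, hZD0, hv]
    · simp [hd, Matrix.mulVec, dotProduct, Fin.sum_univ_two, hZD1, hv]
      linear_combination -hc1
  have hSv : Z S = (s : Matrix (Fin 2) (Fin 2) R) *ᵥ v - v := by
    funext j
    fin_cases j
    · simp [hSs, hs, Matrix.mulVec, dotProduct, Fin.sum_univ_two, hZS0, hv]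
      linear_combination -htc
    · simp [hs, Matrix.mulVec, dotProduct, Fin.sum_univ_two, hZS1, hv]
  -- now the induction over the closure
  have main : ∀ (x : GL (Fin 2) R) (hx : x ∈ Subgroup.closure {d, s}),
      Z ⟨x, hx⟩ = (x : Matrix (Fin 2) (Fin 2) R) *ᵥ v - v := by
    intro x hx
    induction hx using Subgroup.closure_induction with
    | mem y hy =>
        rcases hy with hy | hy
        · subst hy; exact hDv
        · simp only [Set.mem_singleton_iff] at hy; subst hy; exact hSv
    | one =>
        show Z 1 = ((1 : GL (Fin 2) R) : Matrix (Fin 2) (Fin 2) R) *ᵥ v - v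
        rw [hZ1]
        simp [Matrix.one_mulVec]
    | mul x y hx hy ihx ihy =>
        have hmul : (⟨x * y, mul_mem hx hy⟩ : Subgroup.closure {d, s}) =
          ⟨x, hx⟩ * ⟨y, hy⟩ := rfl
        rw [hmul, hZ ⟨x, hx⟩ ⟨y, hy⟩, ihx, ihy]
        show _ = ((x * y : GL (Fin 2) R) : Matrix (Fin 2) (Fin 2) R) *ᵥ v - v
        rw [Units.val_mul, Matrix.mulVec_sub, ← Matrix.mulVec_mulVec]
        abel
    | inv x hx ih =>
        set g : Subgroup.closure {d, s} := ⟨x, hx⟩ with hg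
        have h := hZ g g⁻¹
        rw [mul_inv_cancel, hZ1] at h
        have hginv : (g⁻¹ : Subgroup.closure {d, s}) = ⟨x⁻¹, inv_mem hx⟩ := rfl
        have hmv : ((x : Matrix (Fin 2) (Fin 2) R)) *ᵥ Z g⁻¹ = -(Z g) := by
          have := h.symm
          linear_combination (norm := module) this
        have key : Z g⁻¹ = ((x⁻¹ : GL (Fin 2) R) : Matrix (Fin 2) (Fin 2) R) *ᵥ v - v := by
          calc Z g⁻¹ = (1 : Matrix (Fin 2) (Fin 2) R) *ᵥ Z g⁻¹ := by
                rw [Matrix.one_mulVec]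
            _ = (((x⁻¹ : GL (Fin 2) R) : Matrix (Fin 2) (Fin 2) R) *
                  ((x : GL (Fin 2) R) : Matrix (Fin 2) (Fin 2) R)) *ᵥ Z g⁻¹ := by
                rw [← Units.val_mul, inv_mul_cancel, Units.val_one]
            _ = ((x⁻¹ : GL (Fin 2) R) : Matrix (Fin 2) (Fin 2) R) *ᵥ
                  (((x : GL (Fin 2) R) : Matrix (Fin 2) (Fin 2) R) *ᵥ Z g⁻¹) := by
                rw [Matrix.mulVec_mulVec]
            _ = ((x⁻¹ : GL (Fin 2) R) : Matrix (Fin 2) (Fin 2) R) *ᵥ (-(Z g)) := by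
                rw [hmv]
            _ = ((x⁻¹ : GL (Fin 2) R) : Matrix (Fin 2) (Fin 2) R) *ᵥ
                  (v - ((x : GL (Fin 2) R) : Matrix (Fin 2) (Fin 2) R) *ᵥ v) := by
                rw [ih]; congr 1; abel
            _ = ((x⁻¹ : GL (Fin 2) R) : Matrix (Fin 2) (Fin 2) R) *ᵥ v - v := by
                rw [Matrix.mulVec_sub, Matrix.mulVec_mulVec, ← Units.val_mul,
                  inv_mul_cancel, Units.val_one, Matrix.one_mulVec]
        rw [← hginv] at *
        exact key
  intro g
  obtain ⟨x, hx⟩ := g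
  exact main x hx
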